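/- Let n be prime and k ∈ ℕ with k⁴ ≤ δ·n for δ ∈ (0,1). Then the number of k-element subsets X of ℤ/nℤ with |X +̂ X| = k(k−1)/2 is at least (1 − δ)·C(n, k), where X +̂ X = {x₁ + x₂ : x₁, x₂ ∈ X, x₁ ≠ x₂} denotes the restricted sumset. -/

import Mathlib

open Classical

section Aux
open Finset

theorem count_contain {α : Type*} [Fintype α] [DecidableEq α] (Q : Finset α) (k : ℕ)
    (hQ : Q.card = 4) :
    ((Finset.univ : Finset (Finset α)).filter (fun X => X.card = k ∧ Q ⊆ X)).card ≤
      (Fintype.card α - 4).choose (k - 4) := by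
  have hcard : ((univ : Finset α) \ Q).card = Fintype.card α - 4 := by
    rw [card_sdiff_of_subset (subset_univ Q), card_univ, hQ]
  calc ((Finset.univ : Finset (Finset α)).filter (fun X => X.card = k ∧ Q ⊆ X)).card
      ≤ (((univ : Finset α) \ Q).powersetCard (k - 4)).card := by
        apply card_le_card_of_injOn (fun X => X \ Q)
        · intro X hX
          simp only [mem_coe, mem_filter, mem_univ, true_and] at hX
          rw [mem_coe, mem_powersetCard]
          exact ⟨sdiff_subset_sdiff (subset_univ X) le_rfl,
            by rw [card_sdiff_of_subset hX.2, hX.1, hQ]⟩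
        · intro X hX Y hY hXY
          simp only [coe_filter, Set.mem_setOf_eq, mem_univ, true_and] at hX hY
          rw [← sdiff_union_of_subset hX.2, ← sdiff_union_of_subset hY.2]
          simp only [] at hXY
          rw [hXY]
    _ = (Fintype.card α - 4).choose (k - 4) := by rw [card_powersetCard, hcard]

theorem choose_identity (m j : ℕ) :
    (m + 1) * (m + 2) * (m + 3) * (m + 4) * m.choose j =
      (j + 1) * (j + 2) * (j + 3) * (j + 4) * (m + 4).choose (j + 4) := by
  have h1 := Nat.add_one_mul_choose_eq m j
  have h2 := Nat.add_one_mul_choose_eq (m + 1) (j + 1)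
  have h3 := Nat.add_one_mul_choose_eq (m + 2) (j + 2)
  have h4 := Nat.add_one_mul_choose_eq (m + 3) (j + 3)
  simp only [Nat.add_assoc, Nat.reduceAdd] at h2 h3 h4
  calc (m + 1) * (m + 2) * (m + 3) * (m + 4) * m.choose j
      = (m + 4) * ((m + 3) * ((m + 2) * ((m + 1) * m.choose j))) := by ring
    _ = (m + 4) * ((m + 3) * ((m + 2) * ((m + 1).choose (j + 1) * (j + 1)))) := by rw [h1]
    _ = (j + 1) * ((m + 4) * ((m + 3) * ((m + 2) * (m + 1).choose (j + 1)))) := by ring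
    _ = (j + 1) * ((m + 4) * ((m + 3) * ((m + 2).choose (j + 2) * (j + 2)))) := by rw [h2]
    _ = (j + 1) * ((j + 2) * ((m + 4) * ((m + 3) * (m + 2).choose (j + 2)))) := by ring
    _ = (j + 1) * ((j + 2) * ((m + 4) * ((m + 3).choose (j + 3) * (j + 3)))) := by rw [h3]
    _ = (j + 1) * ((j + 2) * ((j + 3) * ((m + 4) * (m + 3).choose (j + 3)))) := by ring
    _ = (j + 1) * ((j + 2) * ((j + 3) * ((m + 4).choose (j + 4) * (j + 4)))) := by rw [h4]
    _ = (j + 1) * (j + 2) * (j + 3) * (j + 4) * (m + 4).choose (j + 4) := by ring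


theorem sidon_card {n k : ℕ} [NeZero n] (X : Finset (ZMod n)) (hX : X.card = k)
    (h : ¬ ∃ a b c d : ZMod n, a ∈ X ∧ b ∈ X ∧ c ∈ X ∧ d ∈ X ∧
      a ≠ b ∧ a ≠ c ∧ a ≠ d ∧ b ≠ c ∧ b ≠ d ∧ c ≠ d ∧ a + b = c + d) :
    (X.offDiag.image fun p => p.1 + p.2).card = k * (k - 1) / 2 := by
  have himg : (X.offDiag.image fun p => p.1 + p.2) =
      (X.powersetCard 2).image (fun s => s.sum id) := by
    ext z
    simp only [mem_image, mem_offDiag, mem_powersetCard]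
    constructor
    · rintro ⟨⟨a, b⟩, ⟨ha, hb, hab⟩, rfl⟩
      exact ⟨{a, b}, ⟨by simp [insert_subset_iff, ha, hb], card_pair hab⟩,
        by simp [Finset.sum_pair hab]⟩
    · rintro ⟨s, ⟨hs, hs2⟩, rfl⟩
      obtain ⟨a, b, hab, rfl⟩ := card_eq_two.1 hs2
      exact ⟨(a, b), ⟨hs (by simp), hs (by simp), hab⟩, by simp [Finset.sum_pair hab]⟩
  rw [himg, card_image_of_injOn, card_powersetCard, hX, Nat.choose_two_right]
  intro s hs t ht hst
  rw [mem_coe, mem_powersetCard] at hs ht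
  obtain ⟨a, b, hab, rfl⟩ := card_eq_two.1 hs.2
  obtain ⟨c, d, hcd, rfl⟩ := card_eq_two.1 ht.2
  simp only [Finset.sum_pair hab, Finset.sum_pair hcd, id] at hst
  have ha := hs.1 (mem_insert_self a _)
  have hb := hs.1 (mem_insert_of_mem (mem_singleton_self b))
  have hc := ht.1 (mem_insert_self c _)
  have hd := ht.1 (mem_insert_of_mem (mem_singleton_self d))
  by_cases hac : a = c
  · subst hac
    have : b = d := by
      have := hst; exact add_left_cancel this
    rw [this]
  by_cases had : a = d
  · subst had
    have hbc : b = c := by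
      have : a + b = c + a := hst
      rw [add_comm c a] at this
      exact add_left_cancel this
    rw [hbc, pair_comm]
  by_cases hbc : b = c
  · subst hbc
    have : a = d := by
      have : b + a = b + d := by rw [add_comm] at hst; rw [hst]
      exact add_left_cancel this
    exact absurd this had
  by_cases hbd : b = d
  · subst hbd
    have : a = c := by
      have : a + b = c + b := hst
      exact add_right_cancel this
    exact absurd this hac
  exact absurd ⟨a, b, c, d, ha, hb, hc, hd, hab, hac, had, hbc, hbd, hcd, hst⟩ h


theorem bad_count (n k : ℕ) [NeZero n] :
    ((Finset.univ : Finset (Finset (ZMod n))).filter (fun X => X.card = k ∧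
      ∃ a b c d : ZMod n, a ∈ X ∧ b ∈ X ∧ c ∈ X ∧ d ∈ X ∧
      a ≠ b ∧ a ≠ c ∧ a ≠ d ∧ b ≠ c ∧ b ≠ d ∧ c ≠ d ∧ a + b = c + d)).card ≤
    n ^ 3 * (n - 4).choose (k - 4) := by
  classical
  set Q : ZMod n × ZMod n × ZMod n → Finset (ZMod n) :=
    fun q => {q.1, q.2.1, q.2.2, q.1 + q.2.1 - q.2.2} with hQdef
  set F : ZMod n × ZMod n × ZMod n → Finset (Finset (ZMod n)) :=
    fun q => Finset.univ.filter (fun X => X.card = k ∧ (Q q).card = 4 ∧ Q q ⊆ X) with hFdef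
  have hsub : ((Finset.univ : Finset (Finset (ZMod n))).filter (fun X => X.card = k ∧
      ∃ a b c d : ZMod n, a ∈ X ∧ b ∈ X ∧ c ∈ X ∧ d ∈ X ∧
      a ≠ b ∧ a ≠ c ∧ a ≠ d ∧ b ≠ c ∧ b ≠ d ∧ c ≠ d ∧ a + b = c + d)) ⊆
      (Finset.univ : Finset (ZMod n × ZMod n × ZMod n)).biUnion F := by
    intro X hX
    simp only [mem_filter, mem_univ, true_and] at hX
    obtain ⟨hXk, a, b, c, d, ha, hb, hc, hd, hab, hac, had, hbc, hbd, hcd, hsum⟩ := hX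
    rw [mem_biUnion]
    refine ⟨(a, b, c), mem_univ _, ?_⟩
    have hdval : a + b - c = d := by rw [hsum]; ring
    simp only [hFdef, hQdef, mem_filter, mem_univ, true_and, hdval]
    refine ⟨hXk, ?_, ?_⟩
    · rw [card_insert_of_notMem (by simp [hab, hac, had]),
        card_insert_of_notMem (by simp [hbc, hbd]), card_pair hcd]
    · simp [insert_subset_iff, ha, hb, hc, hd]
  calc _ ≤ ((Finset.univ : Finset (ZMod n × ZMod n × ZMod n)).biUnion F).card :=
        card_le_card hsub
    _ ≤ ∑ q ∈ (Finset.univ : Finset (ZMod n × ZMod n × ZMod n)), (F q).card :=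
        card_biUnion_le
    _ ≤ (Finset.univ : Finset (ZMod n × ZMod n × ZMod n)).card • ((n - 4).choose (k - 4)) := by
        apply sum_le_card_nsmul
        intro q _
        by_cases h4 : (Q q).card = 4
        · calc (F q).card
              ≤ (Finset.univ.filter (fun X : Finset (ZMod n) => X.card = k ∧ Q q ⊆ X)).card := by
                apply card_le_card
                rw [hFdef]
                intro X hX
                simp only [mem_filter, mem_univ, true_and] at hX ⊢
                exact ⟨hX.1, hX.2.2⟩
            _ ≤ (Fintype.card (ZMod n) - 4).choose (k - 4) := count_contain _ _ h4
            _ = (n - 4).choose (k - 4) := by rw [ZMod.card]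
        · have : F q = ∅ := by
            rw [hFdef, filter_eq_empty_iff]
            intro X _ hX
            exact h4 hX.2.1
          simp [this]
    _ = n ^ 3 * (n - 4).choose (k - 4) := by
        simp only [card_univ, Fintype.card_prod, ZMod.card, smul_eq_mul]
        ring

theorem real_key (J M δ C A : ℝ) (hJM : J ≤ M) (hJ0 : 0 ≤ J)
    (hδ0 : 0 < δ) (hkk : (J+4)^4 ≤ δ*(M+4))
    (hA0 : 0 ≤ A) (hC0 : 0 ≤ C)
    (hid : (M+1)*(M+2)*(M+3)*(M+4)*A = (J+1)*(J+2)*(J+3)*(J+4)*C) :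
    (M+4)^3 * A ≤ δ * C := by
  have hM0 : (0:ℝ) ≤ M := le_trans hJ0 hJM
  have s1 : (J+1)*(M+4) ≤ (J+4)*(M+1) := by nlinarith
  have s2 : (J+2)*(M+4) ≤ (J+4)*(M+2) := by nlinarith
  have s3 : (J+3)*(M+4) ≤ (J+4)*(M+3) := by nlinarith
  have h12 : ((J+1)*(M+4)) * ((J+2)*(M+4)) ≤ ((J+4)*(M+1)) * ((J+4)*(M+2)) :=
    mul_le_mul s1 s2 (by positivity) (by positivity)
  have h123 : ((J+1)*(M+4)) * ((J+2)*(M+4)) * ((J+3)*(M+4)) ≤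
      ((J+4)*(M+1)) * ((J+4)*(M+2)) * ((J+4)*(M+3)) :=
    mul_le_mul h12 s3 (by positivity) (by positivity)
  have g1 : (M+4)^3 * ((J+1)*(J+2)*(J+3)) ≤ (J+4)^3 * ((M+1)*(M+2)*(M+3)) := by
    calc (M+4)^3 * ((J+1)*(J+2)*(J+3))
        = ((J+1)*(M+4)) * ((J+2)*(M+4)) * ((J+3)*(M+4)) := by ring
      _ ≤ ((J+4)*(M+1)) * ((J+4)*(M+2)) * ((J+4)*(M+3)) := h123
      _ = (J+4)^3 * ((M+1)*(M+2)*(M+3)) := by ring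
  have g2 : (M+4)^3 * ((J+1)*(J+2)*(J+3)*(J+4)) ≤
      δ * ((M+1)*(M+2)*(M+3)*(M+4)) := by
    calc (M+4)^3 * ((J+1)*(J+2)*(J+3)*(J+4))
        = ((M+4)^3 * ((J+1)*(J+2)*(J+3))) * (J+4) := by ring
      _ ≤ ((J+4)^3 * ((M+1)*(M+2)*(M+3))) * (J+4) :=
          mul_le_mul_of_nonneg_right g1 (by positivity)
      _ = (J+4)^4 * ((M+1)*(M+2)*(M+3)) := by ring
      _ ≤ (δ * (M+4)) * ((M+1)*(M+2)*(M+3)) :=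
          mul_le_mul_of_nonneg_right hkk (by positivity)
      _ = δ * ((M+1)*(M+2)*(M+3)*(M+4)) := by ring
  have hN4pos : (0:ℝ) < (M+1)*(M+2)*(M+3)*(M+4) := by positivity
  rw [← mul_le_mul_iff_right₀ hN4pos]
  calc (M+1)*(M+2)*(M+3)*(M+4) * ((M+4)^3 * A)
      = (M+4)^3 * ((M+1)*(M+2)*(M+3)*(M+4) * A) := by ring
    _ = (M+4)^3 * ((J+1)*(J+2)*(J+3)*(J+4) * C) := by rw [hid]
    _ = ((M+4)^3 * ((J+1)*(J+2)*(J+3)*(J+4))) * C := by ring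
    _ ≤ (δ * ((M+1)*(M+2)*(M+3)*(M+4))) * C := mul_le_mul_of_nonneg_right g2 hC0
    _ = (M+1)*(M+2)*(M+3)*(M+4) * (δ * C) := by ring


theorem total_count (n k : ℕ) [NeZero n] :
    ((Finset.univ : Finset (Finset (ZMod n))).filter (fun X => X.card = k)).card =
      n.choose k := by
  have h : (Finset.univ : Finset (ZMod n)).powersetCard k =
      Finset.univ.filter (fun X => X.card = k) := by
    rw [powersetCard_eq_filter, powerset_univ]
  rw [← h, card_powersetCard, card_univ, ZMod.card]

end Aux

open Finset in
/-- Almost all `k`-subsets of `ℤ/nℤ` (for `n` prime, `k⁴ ≤ δn`) have all pairwise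
sums of distinct elements distinct, i.e. `|X +̂ X| = k(k−1)/2`. -/
theorem count_sidon_like_sets (n k : ℕ) (hn : n.Prime) [NeZero n]
    (δ : ℝ) (hδ0 : 0 < δ) (hδ1 : δ < 1) (hk : (k : ℝ) ^ 4 ≤ δ * n) :
    (1 - δ) * (n.choose k : ℝ) ≤
      (((Finset.univ : Finset (Finset (ZMod n))).filter fun X =>
        X.card = k ∧ (X.offDiag.image fun p => p.1 + p.2).card = k * (k - 1) / 2).card : ℝ) := by
  classical
  by_cases hkn : n < k
  · rw [Nat.choose_eq_zero_of_lt hkn]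
    push_cast
    rw [mul_zero]
    positivity
  push_neg at hkn
  -- split into good and bad
  have hsplit : (n.choose k : ℕ) ≤
      ((Finset.univ : Finset (Finset (ZMod n))).filter fun X =>
        X.card = k ∧ (X.offDiag.image fun p => p.1 + p.2).card = k * (k - 1) / 2).card +
      ((Finset.univ : Finset (Finset (ZMod n))).filter (fun X => X.card = k ∧
        ∃ a b c d : ZMod n, a ∈ X ∧ b ∈ X ∧ c ∈ X ∧ d ∈ X ∧
        a ≠ b ∧ a ≠ c ∧ a ≠ d ∧ b ≠ c ∧ b ≠ d ∧ c ≠ d ∧ a + b = c + d)).card := by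
    rw [← total_count n k]
    refine le_trans (card_le_card ?_) (card_union_le _ _)
    intro X hX
    simp only [mem_filter, mem_univ, true_and] at hX
    rw [mem_union]
    by_cases hq : ∃ a b c d : ZMod n, a ∈ X ∧ b ∈ X ∧ c ∈ X ∧ d ∈ X ∧
        a ≠ b ∧ a ≠ c ∧ a ≠ d ∧ b ≠ c ∧ b ≠ d ∧ c ≠ d ∧ a + b = c + d
    · exact Or.inr (by simp only [mem_filter, mem_univ, true_and]; exact ⟨hX, hq⟩)
    · refine Or.inl ?_
      simp only [mem_filter, mem_univ, true_and]
      exact ⟨hX, sidon_card X hX hq⟩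
  have hbadle := bad_count n k
  -- bound the bad count in ℝ
  have hbad : (((Finset.univ : Finset (Finset (ZMod n))).filter (fun X => X.card = k ∧
      ∃ a b c d : ZMod n, a ∈ X ∧ b ∈ X ∧ c ∈ X ∧ d ∈ X ∧
      a ≠ b ∧ a ≠ c ∧ a ≠ d ∧ b ≠ c ∧ b ≠ d ∧ c ≠ d ∧ a + b = c + d)).card : ℝ) ≤
      δ * (n.choose k : ℝ) := by
    by_cases hk4 : k < 4
    · -- bad set is empty
      have hempty : ((Finset.univ : Finset (Finset (ZMod n))).filter (fun X => X.card = k ∧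
          ∃ a b c d : ZMod n, a ∈ X ∧ b ∈ X ∧ c ∈ X ∧ d ∈ X ∧
          a ≠ b ∧ a ≠ c ∧ a ≠ d ∧ b ≠ c ∧ b ≠ d ∧ c ≠ d ∧ a + b = c + d)) = ∅ := by
        rw [filter_eq_empty_iff]
        rintro X - ⟨hXk, a, b, c, d, ha, hb, hc, hd, hab, hac, had, hbc, hbd, hcd, -⟩
        have hQX : ({a, b, c, d} : Finset (ZMod n)) ⊆ X := by
          simp [insert_subset_iff, ha, hb, hc, hd]
        have hQ4 : ({a, b, c, d} : Finset (ZMod n)).card = 4 := by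
          rw [card_insert_of_notMem (by simp [hab, hac, had]),
            card_insert_of_notMem (by simp [hbc, hbd]), card_pair hcd]
        have := card_le_card hQX
        omega
      rw [hempty]
      simp only [card_empty, Nat.cast_zero]
      positivity
    push_neg at hk4
    obtain ⟨j, rfl⟩ : ∃ j, k = j + 4 := ⟨k - 4, by omega⟩
    obtain ⟨m, rfl⟩ : ∃ m, n = m + 4 := ⟨n - 4, by omega⟩
    simp only [Nat.add_sub_cancel] at hbadle
    have hidR : ((m:ℝ)+1)*((m:ℝ)+2)*((m:ℝ)+3)*((m:ℝ)+4) * (m.choose j : ℝ) =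
        ((j:ℝ)+1)*((j:ℝ)+2)*((j:ℝ)+3)*((j:ℝ)+4) * ((m+4).choose (j+4) : ℝ) := by
      exact_mod_cast choose_identity m j
    push_cast at hk
    have hJM : (j:ℝ) ≤ (m:ℝ) := Nat.cast_le.mpr (by omega)
    have key := real_key (j:ℝ) (m:ℝ) δ ((m+4).choose (j+4) : ℝ) (m.choose j : ℝ)
      hJM (Nat.cast_nonneg j) hδ0 hk (Nat.cast_nonneg _) (Nat.cast_nonneg _) hidR
    calc _ ≤ (((m+4)^3 * m.choose j : ℕ) : ℝ) := Nat.cast_le.mpr hbadle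
      _ = ((m:ℝ)+4)^3 * (m.choose j : ℝ) := by push_cast; ring
      _ ≤ δ * (((m+4).choose (j+4) : ℕ) : ℝ) := key
  have hsplitR : ((n.choose k : ℕ) : ℝ) ≤
      (((Finset.univ : Finset (Finset (ZMod n))).filter fun X =>
        X.card = k ∧ (X.offDiag.image fun p => p.1 + p.2).card = k * (k - 1) / 2).card : ℝ) +
      (((Finset.univ : Finset (Finset (ZMod n))).filter (fun X => X.card = k ∧
        ∃ a b c d : ZMod n, a ∈ X ∧ b ∈ X ∧ c ∈ X ∧ d ∈ X ∧
        a ≠ b ∧ a ≠ c ∧ a ≠ d ∧ b ≠ c ∧ b ≠ d ∧ c ≠ d ∧ a + b = c + d)).card : ℝ) := by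
    exact_mod_cast hsplit
  linarith
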